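/- Let m ≥ 3 be odd, h(x) = g(1/2+x) − 1/2 with g(x) = Σ_{k=(m+1)/2}^{m} C(m,k) x^k (1−x)^{m−k}, and γ = m C(m−1,(m−1)/2) 2^{−(m−1)}. Fix α ≥ 0. Then the sequence n ↦ h^{(n)}(α γ^{−n}) (defined for n large enough that α γ^{−n} ≤ 1/2) is nonincreasing in n and bounded below by 0; hence the limit L(α) := lim_{n→∞} h^{(n)}(α γ^{−n}) exists. -/

import Mathlib

/-- The majority polynomial: probability that `Bin(m,x) ≥ (m+1)/2`. -/
noncomputable def majPoly (m : ℕ) (x : ℝ) : ℝ :=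
  ∑ k ∈ Finset.Icc ((m + 1) / 2) m, (m.choose k : ℝ) * x ^ k * (1 - x) ^ (m - k)

/-- `h(x) = g(1/2 + x) − 1/2`, the recentered majority polynomial. -/
noncomputable def majH (m : ℕ) (x : ℝ) : ℝ := majPoly m (1/2 + x) - 1/2

/-- `γ(m) = m · C(m−1,(m−1)/2) · 2^{−(m−1)}`. -/
noncomputable def gammaMaj (m : ℕ) : ℝ :=
  (m : ℝ) * ((m - 1).choose ((m - 1) / 2) : ℝ) / 2 ^ (m - 1)

lemma majPoly_hasDerivAt (k : ℕ) (x : ℝ) :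
    HasDerivAt (majPoly (2*k+1))
      ((2*k+1 : ℝ) * ((2*k).choose k : ℝ) * (x ^ k * (1 - x) ^ k)) x := by
  have hD : ∀ j ∈ Finset.Icc (k+1) (2*k+1),
      HasDerivAt (fun y : ℝ => ((2*k+1).choose j : ℝ) * y ^ j * (1 - y) ^ (2*k+1 - j))
        (((2*k+1).choose j : ℝ) *
          ((j : ℝ) * x ^ (j-1) * (1-x) ^ (2*k+1-j)
            + x ^ j * (((2*k+1-j : ℕ) : ℝ) * (1-x) ^ (2*k+1-j-1) * (-1)))) x := by
    intro j _
    have h1 : HasDerivAt (fun y : ℝ => y ^ j) ((j:ℝ) * x ^ (j-1)) x := hasDerivAt_pow j x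
    have h2 : HasDerivAt (fun y : ℝ => (1 - y) ^ (2*k+1-j))
        (((2*k+1-j : ℕ):ℝ) * (1-x) ^ (2*k+1-j-1) * (-1)) x := by
      have := ((hasDerivAt_id x).const_sub (1:ℝ)).pow (2*k+1-j)
      simpa [Pi.pow_def] using this
    have := (h1.mul h2).const_mul ((2*k+1).choose j : ℝ)
    convert this using 1
    · rfl
    · rfl
    ext y; simp only [Pi.mul_apply]; ring
  have hsum := HasDerivAt.sum hD
  have hmaj : majPoly (2*k+1) = fun y => ∑ j ∈ Finset.Icc (k+1) (2*k+1),
      ((2*k+1).choose j : ℝ) * y ^ j * (1 - y) ^ (2*k+1 - j) := by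
    funext y
    have : (2*k+1+1)/2 = k+1 := by omega
    simp [majPoly, this]
  rw [hmaj]
  convert hsum using 1
  · rfl
  · rfl
  · ext y; rw [Finset.sum_apply]
  -- now compute the sum of derivatives
  set a : ℕ → ℝ := fun j => (2*k+1 : ℝ) * ((2*k).choose j : ℝ) * x ^ j * (1-x) ^ (2*k - j) with ha
  have key : ∀ j ∈ Finset.Icc (k+1) (2*k),
      ((2*k+1).choose j : ℝ) *
          ((j : ℝ) * x ^ (j-1) * (1-x) ^ (2*k+1-j)
            + x ^ j * (((2*k+1-j : ℕ) : ℝ) * (1-x) ^ (2*k+1-j-1) * (-1)))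
        = a (j-1) - a j := by
    intro j hj
    simp only [Finset.mem_Icc] at hj
    obtain ⟨i, rfl⟩ : ∃ i, j = i+1 := ⟨j-1, by omega⟩
    have h1 := Nat.add_one_mul_choose_eq (2*k) i
    have h2 := Nat.choose_mul_succ_eq (2*k) (i+1)
    rw [show 2*k+1-(i+1) = 2*k-i from by omega] at h2
    have c1 : ((2*k+1:ℕ) : ℝ) * ((2*k).choose i : ℝ) = ((2*k+1).choose (i+1) : ℝ) * ((i+1 : ℕ) : ℝ) := by
      exact_mod_cast congrArg (fun n : ℕ => (n:ℝ)) h1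
    have c2 : ((2*k).choose (i+1) : ℝ) * ((2*k+1:ℕ) : ℝ) = ((2*k+1).choose (i+1) : ℝ) * ((2*k-i : ℕ) : ℝ) := by
      exact_mod_cast congrArg (fun n : ℕ => (n:ℝ)) h2
    simp only [ha, show i+1-1 = i from rfl, show 2*k+1-(i+1) = 2*k-i from by omega,
      show 2*k-(i+1) = 2*k-i-1 from by omega]
    push_cast at c1 c2 ⊢
    linear_combination (x^i*(1-x)^(2*k-i)) * c1.symm + (x^(i+1)*(1-x)^(2*k-i-1))*c2
  have hins : Finset.Icc (k+1) (2*k+1) = insert (2*k+1) (Finset.Icc (k+1) (2*k)) :=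
    (Finset.insert_Icc_right_eq_Icc_add_one (by omega)).symm
  rw [hins, Finset.sum_insert (by simp)]
  rw [Finset.sum_congr rfl key]
  have htel : ∑ j ∈ Finset.Icc (k+1) (2*k), (a (j-1) - a j) = a k - a (2*k) := by
    rw [← Finset.Ico_add_one_right_eq_Icc, Finset.sum_Ico_eq_sum_range]
    rw [show 2*k+1 - (k+1) = k from by omega]
    rw [Finset.sum_congr rfl (fun i _ => by
      rw [show k+1+i-1 = k+i from by omega, show k+1+i = k+(i+1) from by omega])]
    rw [Finset.sum_range_sub' (fun i => a (k+i)) k]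
    rw [show k+0 = k from rfl, show k+k = 2*k from by omega]
  rw [htel]
  have htop : ((2*k+1).choose (2*k+1) : ℝ) *
      (((2*k+1 : ℕ) : ℝ) * x ^ (2*k+1-1) * (1-x) ^ (2*k+1-(2*k+1))
        + x ^ (2*k+1) * (((2*k+1-(2*k+1) : ℕ) : ℝ) * (1-x) ^ (2*k+1-(2*k+1)-1) * (-1)))
      = a (2*k) := by
    simp only [ha, Nat.choose_self, Nat.sub_self, show 2*k+1-1 = 2*k from rfl]
    push_cast
    ring
  rw [htop]
  simp only [ha]
  rw [show 2*k-k = k from by omega]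
  ring

lemma majH_hasDerivAt (k : ℕ) (x : ℝ) :
    HasDerivAt (majH (2*k+1))
      ((2*k+1 : ℝ) * ((2*k).choose k : ℝ) * ((1/2 + x) * (1/2 - x)) ^ k) x := by
  have h1 : HasDerivAt (fun y : ℝ => 1/2 + y) 1 x := by
    simpa using (hasDerivAt_id x).const_add (1/2 : ℝ)
  have h2 := (majPoly_hasDerivAt k (1/2 + x)).comp x h1
  have h3 := h2.sub_const (1/2 : ℝ)
  have : majH (2*k+1) = (fun y => majPoly (2*k+1) (1/2 + y) - 1/2) := rfl
  rw [this]
  convert h3 using 1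
  · rfl
  · rfl
  · rfl
  rw [show (1 : ℝ) - (1/2 + x) = 1/2 - x by ring, mul_pow]
  ring

lemma gammaMaj_eq (k : ℕ) :
    gammaMaj (2*k+1) = (2*k+1 : ℝ) * ((2*k).choose k : ℝ) / 2 ^ (2*k) := by
  have h1 : (2*k+1) - 1 = 2*k := rfl
  have h2 : (2*k) / 2 = k := by omega
  simp only [gammaMaj, h1, h2]
  push_cast
  ring

lemma gammaMaj_gt_one (k : ℕ) (hk : 1 ≤ k) : 1 < gammaMaj (2*k+1) := by
  rw [gammaMaj_eq]
  rw [lt_div_iff₀ (by positivity)]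
  have h4 : 4 ^ k ≤ 2 * k * Nat.centralBinom k :=
    Nat.four_pow_le_two_mul_self_mul_centralBinom k hk
  have hc : Nat.centralBinom k = (2*k).choose k := rfl
  have hcpos : 0 < (2*k).choose k := Nat.choose_pos (by omega)
  have hnat : 2 ^ (2*k) < (2*k+1) * ((2*k).choose k) := by
    have : 2 ^ (2*k) = 4 ^ k := by rw [pow_mul]; norm_num
    rw [this]
    calc 4 ^ k ≤ 2 * k * ((2*k).choose k) := by rw [← hc]; exact h4
    _ < (2*k+1) * ((2*k).choose k) := by
        apply Nat.mul_lt_mul_of_lt_of_le (by omega) le_rfl hcpos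
  calc (1:ℝ) * 2 ^ (2*k) = ((2 ^ (2*k) : ℕ) : ℝ) := by push_cast; ring
  _ < (((2*k+1) * ((2*k).choose k) : ℕ) : ℝ) := by exact_mod_cast hnat
  _ = (2*k+1 : ℝ) * ((2*k).choose k : ℝ) := by push_cast; ring

lemma majH_zero (k : ℕ) : majH (2*k+1) 0 = 0 := by
  have hsum : ∑ j ∈ Finset.Icc (k+1) (2*k+1), (2*k+1).choose j = 4 ^ k := by
    have h1 := Nat.sum_range_choose (2*k+1)
    have h2 := Nat.sum_range_choose_halfway k
    have h3 : ∑ j ∈ Finset.Ico 0 (k+1), (2*k+1).choose j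
        + ∑ j ∈ Finset.Ico (k+1) (2*k+2), (2*k+1).choose j
        = ∑ j ∈ Finset.Ico 0 (2*k+2), (2*k+1).choose j :=
      Finset.sum_Ico_consecutive _ (by omega) (by omega)
    rw [← Finset.range_eq_Ico] at h3
    rw [h2, ← Finset.range_eq_Ico, h1] at h3
    have h4 : Finset.Icc (k+1) (2*k+1) = Finset.Ico (k+1) (2*k+2) :=
      (Finset.Ico_add_one_right_eq_Icc _ _).symm
    have h5 : 2 ^ (2*k+1) = 2 * 4 ^ k := by
      rw [pow_succ, pow_mul]; norm_num; ring
    rw [h4]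
    omega
  have hpoly : majPoly (2*k+1) (1/2 : ℝ) = 1/2 := by
    unfold majPoly
    rw [show (2*k+1+1)/2 = k+1 from by omega, show (1 : ℝ) - 1/2 = 1/2 by norm_num]
    rw [Finset.sum_congr rfl (fun j hj => by
      rw [mul_assoc, ← pow_add,
        show j + (2*k+1 - j) = 2*k+1 from by
          simp only [Finset.mem_Icc] at hj; omega])]
    rw [← Finset.sum_mul]
    rw [show ∑ j ∈ Finset.Icc (k+1) (2*k+1), ((2*k+1).choose j : ℝ) = ((4:ℝ))^k by
      exact_mod_cast congrArg (fun n : ℕ => (n:ℝ)) hsum]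
    rw [show (4:ℝ)^k = 2^(2*k) by rw [pow_mul]; norm_num]
    rw [div_pow, one_pow, pow_succ]
    field_simp
  have : (1:ℝ)/2 + 0 = 1/2 := by norm_num
  rw [majH, this, hpoly]
  ring

lemma majPoly_le_one (k : ℕ) (y : ℝ) (h0 : 0 ≤ y) (h1 : y ≤ 1) : majPoly (2*k+1) y ≤ 1 := by
  unfold majPoly
  have h1y : 0 ≤ 1 - y := by linarith
  calc ∑ j ∈ Finset.Icc ((2*k+1+1)/2) (2*k+1), ((2*k+1).choose j : ℝ) * y ^ j * (1-y) ^ (2*k+1-j)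
      ≤ ∑ j ∈ Finset.range (2*k+2), ((2*k+1).choose j : ℝ) * y ^ j * (1-y) ^ (2*k+1-j) := by
        apply Finset.sum_le_sum_of_subset_of_nonneg
        · intro j hj
          simp only [Finset.mem_Icc] at hj
          simp only [Finset.mem_range]
          omega
        · intro j _ _
          positivity
  _ = (y + (1-y)) ^ (2*k+1) := by
        rw [add_pow]
        apply Finset.sum_congr rfl
        intro j _
        ring
  _ = 1 := by norm_num

lemma majH_le_half (k : ℕ) (x : ℝ) (h0 : 0 ≤ x) (h1 : x ≤ 1/2) : majH (2*k+1) x ≤ 1/2 := by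
  have := majPoly_le_one k (1/2 + x) (by linarith) (by linarith)
  unfold majH
  linarith

lemma majH_deriv_nonneg (k : ℕ) (c : ℝ) (h1 : -(1/2) ≤ c) (h2 : c ≤ 1/2) :
    0 ≤ (2*k+1 : ℝ) * ((2*k).choose k : ℝ) * ((1/2 + c) * (1/2 - c)) ^ k := by
  have : (0:ℝ) ≤ (1/2 + c) * (1/2 - c) := mul_nonneg (by linarith) (by linarith)
  positivity

lemma majH_cont (k : ℕ) : Continuous (majH (2*k+1)) :=
  continuous_iff_continuousAt.2 fun x => (majH_hasDerivAt k x).differentiableAt.continuousAt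

lemma majH_mono (k : ℕ) (a b : ℝ) (ha : -(1/2) ≤ a) (hab : a ≤ b) (hb : b ≤ 1/2) :
    majH (2*k+1) a ≤ majH (2*k+1) b := by
  rcases eq_or_lt_of_le hab with rfl | hlt
  · exact le_rfl
  obtain ⟨c, hc, hceq⟩ := exists_hasDerivAt_eq_slope (majH (2*k+1))
    (fun y => (2*k+1 : ℝ) * ((2*k).choose k : ℝ) * ((1/2 + y) * (1/2 - y)) ^ k) hlt
    (majH_cont k).continuousOn (fun y _ => majH_hasDerivAt k y)
  obtain ⟨hc1, hc2⟩ := hc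
  have hnn := majH_deriv_nonneg k c (by linarith) (by linarith)
  rw [hceq] at hnn
  have hba : (0:ℝ) < b - a := sub_pos.2 hlt
  have h2 := mul_nonneg hnn hba.le
  rw [div_mul_cancel₀ _ (ne_of_gt hba)] at h2
  linarith

lemma majH_le_gamma_mul (k : ℕ) (x : ℝ) (h0 : 0 ≤ x) (h1 : x ≤ 1/2) :
    majH (2*k+1) x ≤ gammaMaj (2*k+1) * x := by
  rcases eq_or_lt_of_le h0 with rfl | hlt
  · rw [majH_zero]; simp
  obtain ⟨c, hc, hceq⟩ := exists_hasDerivAt_eq_slope (majH (2*k+1))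
    (fun y => (2*k+1 : ℝ) * ((2*k).choose k : ℝ) * ((1/2 + y) * (1/2 - y)) ^ k) hlt
    (majH_cont k).continuousOn (fun y _ => majH_hasDerivAt k y)
  obtain ⟨hc1, hc2⟩ := hc
  have hbound : (2*k+1 : ℝ) * ((2*k).choose k : ℝ) * ((1/2 + c) * (1/2 - c)) ^ k
      ≤ gammaMaj (2*k+1) := by
    rw [gammaMaj_eq]
    have hcc : (1/2 + c) * (1/2 - c) ≤ 1/4 := by nlinarith
    have hcc0 : 0 ≤ (1/2 + c) * (1/2 - c) := mul_nonneg (by linarith) (by linarith)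
    have := pow_le_pow_left₀ hcc0 hcc k
    have h4 : ((1:ℝ)/4) ^ k = 1 / 2 ^ (2*k) := by
      rw [div_pow, one_pow, pow_mul]; norm_num
    rw [h4] at this
    calc (2*k+1 : ℝ) * ((2*k).choose k : ℝ) * ((1/2 + c) * (1/2 - c)) ^ k
        ≤ (2*k+1 : ℝ) * ((2*k).choose k : ℝ) * (1 / 2 ^ (2*k)) := by
          apply mul_le_mul_of_nonneg_left this (by positivity)
    _ = (2*k+1 : ℝ) * ((2*k).choose k : ℝ) / 2 ^ (2*k) := by ring
  rw [hceq, majH_zero, sub_zero, sub_zero] at hbound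
  rw [div_le_iff₀ hlt] at hbound
  linarith [hbound]

theorem majH_iterates_converge (m : ℕ) (hm : Odd m) (hm3 : 3 ≤ m) (α : ℝ) (hα : 0 ≤ α) :
    ∃ n₀ : ℕ,
      (∀ n ≥ n₀, α / gammaMaj m ^ n ≤ 1/2) ∧
      (∀ n ≥ n₀, (majH m)^[n + 1] (α / gammaMaj m ^ (n + 1)) ≤ (majH m)^[n] (α / gammaMaj m ^ n)) ∧
      (∀ n ≥ n₀, 0 ≤ (majH m)^[n] (α / gammaMaj m ^ n)) ∧
      ∃ L : ℝ, Filter.Tendsto (fun n : ℕ => (majH m)^[n] (α / gammaMaj m ^ n))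
        Filter.atTop (nhds L) := by
  obtain ⟨k, hk⟩ := hm
  have hk' : m = 2*k+1 := by omega
  subst hk'
  have hk1 : 1 ≤ k := by omega
  set γ := gammaMaj (2*k+1) with hγdef
  have hγ1 : 1 < γ := gammaMaj_gt_one k hk1
  have hγ0 : 0 < γ := by linarith
  -- basic facts about h on [0,1/2]
  have hmem : ∀ x : ℝ, 0 ≤ x → x ≤ 1/2 →
      0 ≤ majH (2*k+1) x ∧ majH (2*k+1) x ≤ 1/2 := by
    intro x h0 h1
    constructor
    · have := majH_mono k 0 x (by norm_num) h0 h1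
      rw [majH_zero] at this; exact this
    · exact majH_le_half k x h0 h1
  have hiter : ∀ j : ℕ, ∀ x : ℝ, 0 ≤ x → x ≤ 1/2 →
      0 ≤ (majH (2*k+1))^[j] x ∧ (majH (2*k+1))^[j] x ≤ 1/2 := by
    intro j
    induction j with
    | zero => intro x h0 h1; exact ⟨h0, h1⟩
    | succ j ih =>
      intro x h0 h1
      rw [Function.iterate_succ_apply]
      obtain ⟨a0, a1⟩ := hmem x h0 h1
      exact ih _ a0 a1
  have hmonoiter : ∀ j : ℕ, ∀ a b : ℝ, 0 ≤ a → a ≤ b → b ≤ 1/2 →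
      (majH (2*k+1))^[j] a ≤ (majH (2*k+1))^[j] b := by
    intro j
    induction j with
    | zero => intro a b _ hab _; exact hab
    | succ j ih =>
      intro a b h0 hab h1
      rw [Function.iterate_succ_apply, Function.iterate_succ_apply]
      obtain ⟨a0, a1⟩ := hmem a h0 (le_trans hab h1)
      obtain ⟨b0, b1⟩ := hmem b (le_trans h0 hab) h1
      exact ih _ _ a0 (majH_mono k a b (by linarith) hab h1) b1
  -- choose n₀
  have htend := tendsto_pow_atTop_atTop_of_one_lt hγ1
  obtain ⟨n₀, hn₀⟩ := Filter.eventually_atTop.1 (htend.eventually_ge_atTop (2*α))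
  have hhalf : ∀ n ≥ n₀, α / γ ^ n ≤ 1/2 := by
    intro n hn
    have h2α := hn₀ n hn
    have hpow : (0:ℝ) < γ ^ n := pow_pos hγ0 n
    rw [div_le_iff₀ hpow]
    linarith
  have hx0 : ∀ n : ℕ, 0 ≤ α / γ ^ n := fun n => div_nonneg hα (pow_pos hγ0 n).le
  have hdec : ∀ n ≥ n₀, (majH (2*k+1))^[n + 1] (α / γ ^ (n + 1))
      ≤ (majH (2*k+1))^[n] (α / γ ^ n) := by
    intro n hn
    rw [Function.iterate_succ_apply]
    have hxn1 : α / γ ^ (n+1) ≤ 1/2 := hhalf (n+1) (by omega)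
    have hstep : majH (2*k+1) (α / γ ^ (n+1)) ≤ α / γ ^ n := by
      have := majH_le_gamma_mul k (α / γ ^ (n+1)) (hx0 (n+1)) hxn1
      have heq : γ * (α / γ ^ (n+1)) = α / γ ^ n := by
        rw [pow_succ]
        field_simp
      rw [heq] at this
      exact this
    obtain ⟨hh0, _⟩ := hmem _ (hx0 (n+1)) hxn1
    exact hmonoiter n _ _ hh0 hstep (hhalf n hn)
  have hnonneg : ∀ n ≥ n₀, 0 ≤ (majH (2*k+1))^[n] (α / γ ^ n) := by
    intro n hn
    exact (hiter n _ (hx0 n) (hhalf n hn)).1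
  refine ⟨n₀, hhalf, hdec, hnonneg, ?_⟩
  -- convergence
  set f : ℕ → ℝ := fun n => (majH (2*k+1))^[n] (α / γ ^ n) with hf
  have hanti : Antitone (fun j => f (j + n₀)) := by
    apply antitone_nat_of_succ_le
    intro j
    have h := hdec (j + n₀) (by omega)
    show f (j + 1 + n₀) ≤ f (j + n₀)
    rw [show j + 1 + n₀ = (j + n₀) + 1 from by omega]
    exact h
  have hbdd : BddBelow (Set.range (fun j => f (j + n₀))) := by
    refine ⟨0, ?_⟩
    rintro y ⟨j, rfl⟩
    exact hnonneg (j + n₀) (by omega)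
  have := tendsto_atTop_ciInf hanti hbdd
  refine ⟨_, (Filter.tendsto_add_atTop_iff_nat n₀).1 this⟩
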